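/- Let b ∈ (0,1], λ > 0, M > 0 with b·λ·M > 1, let Q < 0 be the unique negative real solution of b·λ·e^{Q·M} = b·λ + Q, and let μ be the probability measure on [0,∞) with Lebesgue density g(x) = (1/M)(1 − e^{Q·x}) for 0 ≤ x < M and g(x) = −Q·e^{Q·x}/(M·(b·λ + Q)) for x ≥ M. Let B, X, E be independent random variables where B has law μ, X is exponentially distributed with rate λ, and E is Bernoulli with success probability b. Then the random variable B′ = B + X − M·(indicator of {B ≥ M and E = 1}) again has law μ; that is, μ is a stationary distribution of the Markov transition x ↦ x + X − M·1{x ≥ M}·1{E}. -/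

import Mathlib

open MeasureTheory

/-- The limiting piecewise-exponential density of the energy buffer
(extended by `0` on the negative half-line). -/
noncomputable def statDensity (b lam M Q : ℝ) (x : ℝ) : ℝ :=
  if x < 0 then 0
  else if x < M then (1 / M) * (1 - Real.exp (Q * x))
  else (-Q * Real.exp (Q * x)) / (M * (b * lam + Q))

/-- The stationary probability measure on `[0,∞)` with density `statDensity`. -/
noncomputable def statMeasure (b lam M Q : ℝ) : Measure ℝ :=
  volume.withDensity (fun x => ENNReal.ofReal (statDensity b lam M Q x))

/-- The exponential distribution with rate `lam` as a measure on `ℝ`. -/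
noncomputable def expMeasure' (lam : ℝ) : Measure ℝ :=
  volume.withDensity
    (fun x => ENNReal.ofReal (if 0 ≤ x then lam * Real.exp (-lam * x) else 0))

/-- The Bernoulli distribution with success probability `b` as a measure on `Bool`. -/
noncomputable def bernoulliMeasure (b : ℝ) : Measure Bool :=
  ENNReal.ofReal b • Measure.dirac true + ENNReal.ofReal (1 - b) • Measure.dirac false

noncomputable def expDens (lam x : ℝ) : ℝ := if 0 ≤ x then lam * Real.exp (-lam * x) else 0

noncomputable def jumpDens (b lam M Q z : ℝ) : ℝ :=
  (if z < M then statDensity b lam M Q z else 0) +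
  (if 0 ≤ z then statDensity b lam M Q (z + M) else 0)

noncomputable def mixDens (b lam M Q z : ℝ) : ℝ :=
  b * jumpDens b lam M Q z + (1 - b) * statDensity b lam M Q z

lemma measurable_statDensity (b lam M Q : ℝ) : Measurable (statDensity b lam M Q) := by
  unfold statDensity
  refine Measurable.ite (measurableSet_lt measurable_id measurable_const) measurable_const ?_
  refine Measurable.ite (measurableSet_lt measurable_id measurable_const) (by fun_prop) (by fun_prop)

lemma measurable_expDens (lam : ℝ) : Measurable (expDens lam) := by
  unfold expDens
  exact Measurable.ite (measurableSet_le measurable_const measurable_id) (by fun_prop) measurable_const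

lemma measurable_jumpDens (b lam M Q : ℝ) : Measurable (jumpDens b lam M Q) := by
  unfold jumpDens
  refine Measurable.add ?_ ?_
  · exact Measurable.ite (measurableSet_lt measurable_id measurable_const)
      (measurable_statDensity b lam M Q) measurable_const
  · exact Measurable.ite (measurableSet_le measurable_const measurable_id)
      ((measurable_statDensity b lam M Q).comp (measurable_id.add_const M)) measurable_const

lemma measurable_mixDens (b lam M Q : ℝ) : Measurable (mixDens b lam M Q) := by
  unfold mixDens
  exact ((measurable_jumpDens b lam M Q).const_mul b).add
    ((measurable_statDensity b lam M Q).const_mul (1 - b))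

section Facts

variable {b lam M Q : ℝ} (hb0 : 0 < b) (hb1 : b ≤ 1) (hlam : 0 < lam) (hM : 0 < M)
  (hQ : Q < 0) (hroot : b * lam * Real.exp (Q * M) = b * lam + Q)

include hb0 hlam hroot in
lemma hbQ_pos : 0 < b * lam + Q := by
  rw [← hroot]; positivity

include hb0 hb1 hlam hroot in
lemma hlQ_pos : 0 < lam + Q := by
  have h1 : 0 < b * lam + Q := hbQ_pos hb0 hlam hroot
  nlinarith

include hb0 hlam hroot in
lemma expQM_eq : Real.exp (Q * M) = (b * lam + Q) / (b * lam) := by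
  rw [← hroot]; field_simp

include hb0 hlam hQ hroot hM in
lemma statDensity_nonneg (x : ℝ) : 0 ≤ statDensity b lam M Q x := by
  have h1 : 0 < b * lam + Q := hbQ_pos hb0 hlam hroot
  have hQ' : 0 < -Q := by linarith
  unfold statDensity
  split_ifs with h2 h3
  · exact le_refl 0
  · have hx : 0 ≤ x := not_lt.1 h2
    have he : Real.exp (Q * x) ≤ 1 := Real.exp_le_one_iff.2 (by nlinarith)
    have h5 : 0 ≤ 1 - Real.exp (Q * x) := by linarith
    positivity
  · positivity

include hb0 hlam hQ hroot hM in
lemma statDensity_le (x : ℝ) :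
    statDensity b lam M Q x ≤ 1 / M + -Q / (M * (b * lam + Q)) := by
  have h1 : 0 < b * lam + Q := hbQ_pos hb0 hlam hroot
  have hQ' : 0 < -Q := by linarith
  have hA : (0:ℝ) ≤ -Q / (M * (b * lam + Q)) := by positivity
  have hB : (0:ℝ) < 1 / M := by positivity
  unfold statDensity
  split_ifs with h2 h3
  · positivity
  · have he : (0:ℝ) < Real.exp (Q * x) := Real.exp_pos _
    have h4 : (1 / M) * (1 - Real.exp (Q * x)) ≤ 1 / M := by nlinarith
    linarith
  · have hx : 0 ≤ x := not_lt.1 h2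
    have hxe : Real.exp (Q * x) ≤ 1 := Real.exp_le_one_iff.2 (by nlinarith)
    have he : (0:ℝ) < Real.exp (Q * x) := Real.exp_pos _
    have h5 : -Q * Real.exp (Q * x) / (M * (b * lam + Q)) ≤ -Q / (M * (b * lam + Q)) :=
      (div_le_div_iff_of_pos_right (by positivity)).2 (by nlinarith)
    linarith

include hb0 hlam hQ hroot hM in
lemma jumpDens_nonneg (x : ℝ) : 0 ≤ jumpDens b lam M Q x := by
  unfold jumpDens
  have h1 := statDensity_nonneg hb0 hlam hM hQ hroot (b := b) (lam := lam) x
  have h2 := statDensity_nonneg hb0 hlam hM hQ hroot (b := b) (lam := lam) (x + M)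
  split_ifs <;> simp <;> linarith

include hb0 hb1 hlam hQ hroot hM in
lemma mixDens_nonneg (x : ℝ) : 0 ≤ mixDens b lam M Q x := by
  unfold mixDens
  have h1 := statDensity_nonneg hb0 hlam hM hQ hroot (b := b) (lam := lam) x
  have h2 := jumpDens_nonneg hb0 hlam hM hQ hroot (b := b) (lam := lam) x
  nlinarith

include hb0 hlam hQ hroot hM in
lemma jumpDens_le (x : ℝ) :
    jumpDens b lam M Q x ≤ 2 * (1 / M + -Q / (M * (b * lam + Q))) := by
  unfold jumpDens
  have h1 := statDensity_le hb0 hlam hM hQ hroot (b := b) (lam := lam) x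
  have h2 := statDensity_le hb0 hlam hM hQ hroot (b := b) (lam := lam) (x + M)
  have h3 := statDensity_nonneg hb0 hlam hM hQ hroot (b := b) (lam := lam) x
  have h4 := statDensity_nonneg hb0 hlam hM hQ hroot (b := b) (lam := lam) (x + M)
  have h1' : 0 < b * lam + Q := hbQ_pos hb0 hlam hroot
  have hQ' : 0 < -Q := by linarith
  have hA : (0:ℝ) ≤ -Q / (M * (b * lam + Q)) := by positivity
  have hB : (0:ℝ) < 1 / M := by positivity
  split_ifs <;> linarith

include hb0 hb1 hlam hQ hroot hM in
lemma mixDens_le (x : ℝ) :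
    mixDens b lam M Q x ≤ 2 * (1 / M + -Q / (M * (b * lam + Q))) := by
  unfold mixDens
  have h1 := statDensity_le hb0 hlam hM hQ hroot (b := b) (lam := lam) x
  have h2 := jumpDens_le hb0 hlam hM hQ hroot (b := b) (lam := lam) x
  have h3 := statDensity_nonneg hb0 hlam hM hQ hroot (b := b) (lam := lam) x
  have h4 := jumpDens_nonneg hb0 hlam hM hQ hroot (b := b) (lam := lam) x
  have h1' : 0 < b * lam + Q := hbQ_pos hb0 hlam hroot
  have hQ' : 0 < -Q := by linarith
  have hA : (0:ℝ) ≤ -Q / (M * (b * lam + Q)) := by positivity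
  have hB : (0:ℝ) < 1 / M := by positivity
  nlinarith

include hb0 hlam hroot hM in
lemma mixDens_eq (z : ℝ) :
    mixDens b lam M Q z =
      if z < 0 then 0
      else if z < M then (1 / M) * (1 - ((lam + Q) / lam) * Real.exp (Q * z))
      else (-Q * ((lam + Q) / lam) * Real.exp (Q * z)) / (M * (b * lam + Q)) := by
  have h1 : 0 < b * lam + Q := hbQ_pos hb0 hlam hroot
  have hEM : Real.exp (Q * M) = (b * lam + Q) / (b * lam) := expQM_eq hb0 hlam hroot
  have hsplit : Real.exp (Q * (z + M)) = Real.exp (Q * z) * Real.exp (Q * M) := by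
    rw [← Real.exp_add]; ring_nf
  unfold mixDens jumpDens statDensity
  rcases lt_or_ge z 0 with hz | hz
  · have h2 : z < M := by linarith
    have h3 : ¬ (0 ≤ z) := not_le.2 hz
    simp [hz, h2, h3]
  · have h3 : ¬ (z < 0) := not_lt.2 hz
    have h4 : ¬ (z + M < 0) := by push_neg; linarith
    have h5 : ¬ (z + M < M) := by push_neg; linarith
    rcases lt_or_ge z M with h6 | h6
    · simp only [h3, if_false, h6, if_true, hz, if_true, h4, h5, hsplit, hEM]
      field_simp
      ring
    · have h7 : ¬ (z < M) := not_lt.2 h6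
      simp only [h3, if_false, h7, hz, if_true, h4, h5, hsplit, hEM]
      field_simp
      ring

lemma integral_exp_mul' (a c d : ℝ) (hd : d ≠ 0) :
    ∫ x in a..c, Real.exp (d * x) = (Real.exp (d * c) - Real.exp (d * a)) / d := by
  have D : ∀ x : ℝ, HasDerivAt (fun y : ℝ => Real.exp (d * y) / d) (Real.exp (d * x)) x := by
    intro x
    have h1 : HasDerivAt (fun y : ℝ => d * y) d x := by
      simpa using (hasDerivAt_id x).const_mul d
    have h2 := (Real.hasDerivAt_exp (d * x)).comp x h1
    have h3 := h2.div_const d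
    simpa [mul_comm, mul_div_assoc, mul_div_cancel_left₀ _ hd] using h3
  rw [intervalIntegral.integral_eq_sub_of_hasDerivAt (fun x _ => D x)
    (((Real.continuous_exp.comp (continuous_const.mul continuous_id)).intervalIntegrable a c))]
  ring

lemma alg1 {lam M Q : ℝ} (hlam : lam ≠ 0) (hM : M ≠ 0) (hQl : Q + lam ≠ 0)
    (u v w E : ℝ) (hu1 : u * v = 1) (hu2 : u * w = E) :
    lam / M * u * ((v - 1) / lam) - (lam + Q) / M * u * ((w - 1) / (Q + lam)) =
    1 / M * (1 - E) := by
  have t1 : lam / M * u * ((v - 1) / lam) = (u * v - u) / M := by field_simp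
  have t2 : (lam + Q) / M * u * ((w - 1) / (Q + lam)) = (u * w - u) / M := by
    field_simp; ring
  rw [t1, t2, hu1, hu2]; ring

lemma alg2 {b lam M Q : ℝ} (hlam : lam ≠ 0) (hM : M ≠ 0) (hQl : Q + lam ≠ 0)
    (hbQ : b * lam + Q ≠ 0) (u w E eQM elamM : ℝ)
    (hroot : b * lam * eQM = b * lam + Q) (hu2 : u * w = E) :
    lam / M * u * ((elamM - 1) / lam) -
        (lam + Q) / M * u * ((eQM * elamM - 1) / (Q + lam)) +
      -Q * (lam + Q) / (M * (b * lam + Q)) * u * ((w - eQM * elamM) / (Q + lam)) =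
    -Q * E / (M * (b * lam + Q)) := by
  have t1 : lam / M * u * ((elamM - 1) / lam) = (u * elamM - u) / M := by field_simp
  have t2 : (lam + Q) / M * u * ((eQM * elamM - 1) / (Q + lam))
      = (u * (eQM * elamM) - u) / M := by field_simp; ring
  have t3 : -Q * (lam + Q) / (M * (b * lam + Q)) * u * ((w - eQM * elamM) / (Q + lam))
      = (Q * (u * (eQM * elamM)) - Q * (u * w)) / (M * (b * lam + Q)) := by
    field_simp; ring
  rw [t1, t2, t3, hu2]
  field_simp
  linear_combination (-(u * elamM)) * hroot

include hb0 hb1 hlam hQ hroot hM in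
lemma conv_eq (y : ℝ) :
    ∫ x, mixDens b lam M Q x * expDens lam (y - x) = statDensity b lam M Q y := by
  have h1 : 0 < b * lam + Q := hbQ_pos hb0 hlam hroot
  have hlQ : 0 < lam + Q := hlQ_pos hb0 hb1 hlam hroot
  have hQl : (Q + lam) ≠ 0 := by intro h; apply hlQ.ne'; linarith
  have hQ' : 0 < -Q := by linarith
  rcases lt_or_ge y 0 with hy | hy
  · have hz : ∀ x : ℝ, mixDens b lam M Q x * expDens lam (y - x) = 0 := by
      intro x
      rcases lt_or_ge x 0 with hx | hx
      · rw [mixDens_eq hb0 hlam hM hroot, if_pos hx, zero_mul]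
      · have hyx : y - x < 0 := by linarith
        rw [expDens, if_neg (not_le.2 hyx), mul_zero]
    rw [show (fun x => mixDens b lam M Q x * expDens lam (y - x)) = fun _ => (0:ℝ) from
      funext hz]
    rw [integral_zero, statDensity, if_pos hy]
  -- now 0 ≤ y
  have hind : (fun x => mixDens b lam M Q x * expDens lam (y - x))
      = (Set.Icc 0 y).indicator (fun x => mixDens b lam M Q x * expDens lam (y - x)) := by
    funext x
    rcases Classical.em (x ∈ Set.Icc 0 y) with hx | hx
    · rw [Set.indicator_of_mem hx]
    · rw [Set.indicator_of_notMem hx]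
      rcases lt_or_ge x 0 with h2 | h2
      · rw [mixDens_eq hb0 hlam hM hroot, if_pos h2, zero_mul]
      · have h3 : y < x := by
          by_contra h4
          exact hx ⟨h2, not_lt.1 h4⟩
        rw [expDens, if_neg (not_le.2 (by linarith)), mul_zero]
  rw [hind, integral_indicator measurableSet_Icc, integral_Icc_eq_integral_Ioc,
    ← intervalIntegral.integral_of_le hy]
  have hFmeas : Measurable (fun x => mixDens b lam M Q x * expDens lam (y - x)) :=
    (measurable_mixDens b lam M Q).mul
      ((measurable_expDens lam).comp (measurable_const.sub measurable_id))
  have hCpos : (0:ℝ) ≤ 2 * (1 / M + -Q / (M * (b * lam + Q))) := by positivity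
  have hFb : ∀ x, ‖mixDens b lam M Q x * expDens lam (y - x)‖
      ≤ 2 * (1 / M + -Q / (M * (b * lam + Q))) * lam := by
    intro x
    have e1 := mixDens_nonneg hb0 hb1 hlam hM hQ hroot (b := b) (lam := lam) x
    have e3 := mixDens_le hb0 hb1 hlam hM hQ hroot (b := b) (lam := lam) x
    have e2 : 0 ≤ expDens lam (y - x) := by
      unfold expDens; split_ifs with h
      · positivity
      · exact le_refl 0
    have e4 : expDens lam (y - x) ≤ lam := by
      unfold expDens; split_ifs with h
      · nlinarith [Real.exp_le_one_iff.2 (show -lam * (y - x) ≤ 0 by nlinarith)]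
      · linarith
    rw [Real.norm_eq_abs, abs_of_nonneg (mul_nonneg e1 e2)]
    exact mul_le_mul e3 e4 e2 hCpos
  have hII : ∀ a c : ℝ, IntervalIntegrable
      (fun x => mixDens b lam M Q x * expDens lam (y - x)) volume a c := by
    intro a c
    refine ⟨?_, ?_⟩ <;>
      exact Measure.integrableOn_of_bounded (measure_Ioc_lt_top).ne
        hFmeas.aestronglyMeasurable (Filter.Eventually.of_forall fun x => hFb x)
  have hG1 : ∀ a c : ℝ, IntervalIntegrable
      (fun x => (lam / M * Real.exp (-lam * y)) * Real.exp (lam * x)) volume a c := by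
    intro a c
    exact (continuous_const.mul
      (Real.continuous_exp.comp (continuous_const.mul continuous_id))).intervalIntegrable a c
  have hG2 : ∀ a c : ℝ, IntervalIntegrable
      (fun x => ((lam + Q) / M * Real.exp (-lam * y)) * Real.exp ((Q + lam) * x)) volume a c := by
    intro a c
    exact (continuous_const.mul
      (Real.continuous_exp.comp (continuous_const.mul continuous_id))).intervalIntegrable a c
  have hptG : ∀ x : ℝ, 0 < x → x < M → x ≤ y →
      mixDens b lam M Q x * expDens lam (y - x)
        = (lam / M * Real.exp (-lam * y)) * Real.exp (lam * x)
          - ((lam + Q) / M * Real.exp (-lam * y)) * Real.exp ((Q + lam) * x) := by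
    intro x hx0 hxM hxy
    rw [mixDens_eq hb0 hlam hM hroot, if_neg (not_lt.2 hx0.le), if_pos hxM,
      expDens, if_pos (by linarith : (0:ℝ) ≤ y - x),
      show -lam * (y - x) = -lam * y + lam * x by ring, Real.exp_add,
      show (Q + lam) * x = Q * x + lam * x by ring, Real.exp_add]
    field_simp
  have hu1 : Real.exp (-lam * y) * Real.exp (lam * y) = 1 := by
    rw [← Real.exp_add]; simp
  have hu2 : Real.exp (-lam * y) * Real.exp ((Q + lam) * y) = Real.exp (Q * y) := by
    rw [← Real.exp_add]; ring_nf
  rcases lt_or_ge y M with h6 | h6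
  · rw [intervalIntegral.integral_congr_ae (g := fun x =>
        (lam / M * Real.exp (-lam * y)) * Real.exp (lam * x)
          - ((lam + Q) / M * Real.exp (-lam * y)) * Real.exp ((Q + lam) * x))
        (Filter.Eventually.of_forall fun x hx => by
          rw [Set.uIoc_of_le hy] at hx
          exact hptG x hx.1 (lt_of_le_of_lt hx.2 h6) hx.2)]
    rw [intervalIntegral.integral_sub (hG1 0 y) (hG2 0 y),
      intervalIntegral.integral_const_mul, intervalIntegral.integral_const_mul,
      integral_exp_mul' _ _ _ hlam.ne', integral_exp_mul' _ _ _ hQl,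
      statDensity, if_neg (not_lt.2 hy), if_pos h6]
    simp only [mul_zero, Real.exp_zero]
    exact alg1 hlam.ne' hM.ne' hQl _ _ _ _ hu1 hu2
  · rw [← intervalIntegral.integral_add_adjacent_intervals (hII 0 M) (hII M y)]
    have hae : ∀ᵐ x : ℝ, x ≠ M := by
      rw [ae_iff]
      have : {x : ℝ | ¬ x ≠ M} = {M} := by ext x; simp
      rw [this]
      exact measure_singleton M
    have eq1 : ∫ x in (0:ℝ)..M, mixDens b lam M Q x * expDens lam (y - x)
        = ∫ x in (0:ℝ)..M, ((lam / M * Real.exp (-lam * y)) * Real.exp (lam * x)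
          - ((lam + Q) / M * Real.exp (-lam * y)) * Real.exp ((Q + lam) * x)) := by
      refine intervalIntegral.integral_congr_ae ?_
      filter_upwards [hae] with x hxM hx
      rw [Set.uIoc_of_le hM.le] at hx
      exact hptG x hx.1 (lt_of_le_of_ne hx.2 hxM) (le_trans hx.2 h6)
    have eq2 : ∫ x in M..y, mixDens b lam M Q x * expDens lam (y - x)
        = ∫ x in M..y, ((-Q * (lam + Q)) / (M * (b * lam + Q)) * Real.exp (-lam * y))
            * Real.exp ((Q + lam) * x) := by
      refine intervalIntegral.integral_congr_ae (Filter.Eventually.of_forall fun x hx => ?_)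
      rw [Set.uIoc_of_le h6] at hx
      have hx0 : ¬ (x < 0) := not_lt.2 (by linarith [hx.1])
      have hxM : ¬ (x < M) := not_lt.2 hx.1.le
      rw [mixDens_eq hb0 hlam hM hroot, if_neg hx0, if_neg hxM,
        expDens, if_pos (by linarith [hx.2] : (0:ℝ) ≤ y - x),
        show -lam * (y - x) = -lam * y + lam * x by ring, Real.exp_add,
        show (Q + lam) * x = Q * x + lam * x by ring, Real.exp_add]
      field_simp
    rw [eq1, eq2,
      intervalIntegral.integral_sub (hG1 0 M) (hG2 0 M),
      intervalIntegral.integral_const_mul, intervalIntegral.integral_const_mul,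
      intervalIntegral.integral_const_mul,
      integral_exp_mul' _ _ _ hlam.ne', integral_exp_mul' _ _ _ hQl,
      integral_exp_mul' _ _ _ hQl,
      statDensity, if_neg (not_lt.2 hy), if_neg (not_lt.2 h6)]
    simp only [mul_zero, Real.exp_zero]
    have hsplit : Real.exp ((Q + lam) * M) = Real.exp (Q * M) * Real.exp (lam * M) := by
      rw [← Real.exp_add]; ring_nf
    rw [hsplit]
    exact alg2 hlam.ne' hM.ne' hQl h1.ne' _ _ _ _ _ hroot hu2

include hlam in
lemma expDens_nonneg (x : ℝ) : 0 ≤ expDens lam x := by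
  unfold expDens; split_ifs with h
  · positivity
  · exact le_refl 0

include hb0 hb1 hlam hQ hroot hM in
lemma conv_integrable (y : ℝ) :
    Integrable (fun x => mixDens b lam M Q x * expDens lam (y - x)) := by
  have h1 : 0 < b * lam + Q := hbQ_pos hb0 hlam hroot
  have hQ' : 0 < -Q := by linarith
  have hFmeas : Measurable (fun x => mixDens b lam M Q x * expDens lam (y - x)) :=
    (measurable_mixDens b lam M Q).mul
      ((measurable_expDens lam).comp (measurable_const.sub measurable_id))
  have hind : (fun x => mixDens b lam M Q x * expDens lam (y - x))
      = (Set.Icc 0 y).indicator (fun x => mixDens b lam M Q x * expDens lam (y - x)) := by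
    funext x
    rcases Classical.em (x ∈ Set.Icc 0 y) with hx | hx
    · rw [Set.indicator_of_mem hx]
    · rw [Set.indicator_of_notMem hx]
      rcases lt_or_ge x 0 with h2 | h2
      · rw [mixDens_eq hb0 hlam hM hroot, if_pos h2, zero_mul]
      · have h3 : y < x := by
          by_contra h4
          exact hx ⟨h2, not_lt.1 h4⟩
        rw [expDens, if_neg (not_le.2 (by linarith)), mul_zero]
  have hCpos : (0:ℝ) ≤ 2 * (1 / M + -Q / (M * (b * lam + Q))) := by positivity
  have hFb : ∀ x, ‖mixDens b lam M Q x * expDens lam (y - x)‖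
      ≤ 2 * (1 / M + -Q / (M * (b * lam + Q))) * lam := by
    intro x
    have e1 := mixDens_nonneg hb0 hb1 hlam hM hQ hroot (b := b) (lam := lam) x
    have e3 := mixDens_le hb0 hb1 hlam hM hQ hroot (b := b) (lam := lam) x
    have e2 : 0 ≤ expDens lam (y - x) := expDens_nonneg hlam _
    have e4 : expDens lam (y - x) ≤ lam := by
      unfold expDens; split_ifs with h
      · nlinarith [Real.exp_le_one_iff.2 (show -lam * (y - x) ≤ 0 by nlinarith)]
      · linarith
    rw [Real.norm_eq_abs, abs_of_nonneg (mul_nonneg e1 e2)]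
    exact mul_le_mul e3 e4 e2 hCpos
  rw [hind, integrable_indicator_iff measurableSet_Icc]
  exact Measure.integrableOn_of_bounded (measure_Icc_lt_top).ne
    hFmeas.aestronglyMeasurable (Filter.Eventually.of_forall fun x => hFb x)

include hb0 hb1 hlam hQ hroot hM in
lemma lconv_eq (y : ℝ) :
    ∫⁻ x, ENNReal.ofReal (mixDens b lam M Q x) * ENNReal.ofReal (expDens lam (y - x))
      = ENNReal.ofReal (statDensity b lam M Q y) := by
  have h0 : ∀ x, ENNReal.ofReal (mixDens b lam M Q x) * ENNReal.ofReal (expDens lam (y - x))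
      = ENNReal.ofReal (mixDens b lam M Q x * expDens lam (y - x)) := fun x =>
    (ENNReal.ofReal_mul (mixDens_nonneg hb0 hb1 hlam hM hQ hroot x)).symm
  rw [lintegral_congr h0,
    ← ofReal_integral_eq_lintegral_ofReal (conv_integrable hb0 hb1 hlam hM hQ hroot y)
      (Filter.Eventually.of_forall fun x =>
        mul_nonneg (mixDens_nonneg hb0 hb1 hlam hM hQ hroot x) (expDens_nonneg hlam _)),
    conv_eq hb0 hb1 hlam hM hQ hroot y]

end Facts

lemma prod_smul_right {α β : Type*} [MeasurableSpace α] [MeasurableSpace β]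
    (μ : Measure α) (ν : Measure β) [SFinite ν] (c : ENNReal) (hc : c ≠ ⊤) :
    μ.prod (c • ν) = c • (μ.prod ν) := by
  ext s hs
  rw [Measure.prod_apply hs, Measure.smul_apply, Measure.prod_apply hs, smul_eq_mul,
    ← lintegral_const_mul' _ _ hc]
  simp

lemma lint_ind (D : ℝ → ENNReal) {s : Set ℝ} (hs : MeasurableSet s) :
    ∫⁻ x, D x * s.indicator 1 x = (volume.withDensity D) s := by
  rw [withDensity_apply _ hs, ← lintegral_indicator hs]
  refine lintegral_congr fun x => ?_
  by_cases hx : x ∈ s <;> simp [Set.indicator, hx]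

lemma map_add_withDensity (p q : ℝ → ENNReal) (hp : Measurable p) (hq : Measurable q) :
    Measure.map (fun z : ℝ × ℝ => z.1 + z.2)
      ((volume.withDensity p).prod (volume.withDensity q))
    = volume.withDensity (fun y => ∫⁻ x, p x * q (y - x)) := by
  have hmeas2 : Measurable (fun z : ℝ × ℝ => p z.2 * q (z.1 - z.2)) :=
    (hp.comp measurable_snd).mul (hq.comp (measurable_fst.sub measurable_snd))
  ext s hs
  have hind : Measurable (s.indicator (1 : ℝ → ENNReal)) := measurable_one.indicator hs
  have hadds : MeasurableSet ((fun z : ℝ × ℝ => z.1 + z.2) ⁻¹' s) := measurable_add hs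
  rw [Measure.map_apply measurable_add hs, Measure.prod_apply hadds]
  have hsec : ∀ x : ℝ, (volume.withDensity q)
      (Prod.mk x ⁻¹' ((fun z : ℝ × ℝ => z.1 + z.2) ⁻¹' s))
      = ∫⁻ y, q (y - x) * s.indicator 1 y := by
    intro x
    have h1 : (Prod.mk x ⁻¹' ((fun z : ℝ × ℝ => z.1 + z.2) ⁻¹' s)) = {y | x + y ∈ s} := rfl
    have h2 : MeasurableSet {y : ℝ | x + y ∈ s} := (measurable_const_add x) hs
    rw [h1, withDensity_apply _ h2, ← lintegral_indicator h2]
    have h3 : ∀ y : ℝ, ({y : ℝ | x + y ∈ s}).indicator q y = q y * s.indicator 1 (x + y) := by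
      intro y
      by_cases hy : x + y ∈ s <;> simp [Set.indicator, hy]
    rw [lintegral_congr h3]
    have h4 := lintegral_add_right_eq_self (μ := volume)
      (fun y => q (y - x) * s.indicator 1 y) x
    rw [← h4]
    refine lintegral_congr fun y => ?_
    rw [add_sub_cancel_right, add_comm]
  rw [lintegral_congr hsec]
  have hmeas3 : ∀ x : ℝ, Measurable (fun y => q (y - x) * s.indicator 1 y) := fun x =>
    ((hq.comp (measurable_id.sub measurable_const)).mul hind)
  rw [lintegral_withDensity_eq_lintegral_mul volume hp
    (Measurable.lintegral_prod_right' (f := fun z : ℝ × ℝ =>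
      q (z.2 - z.1) * s.indicator 1 z.2)
      ((hq.comp (measurable_snd.sub measurable_fst)).mul (hind.comp measurable_snd)))]
  have step : ∀ x : ℝ, (p * fun x => ∫⁻ y, q (y - x) * s.indicator 1 y) x
      = ∫⁻ y, p x * (q (y - x) * s.indicator 1 y) := by
    intro x
    simp only [Pi.mul_apply]
    rw [lintegral_const_mul _ (hmeas3 x)]
  rw [lintegral_congr step]
  rw [lintegral_lintegral_swap
    (((hp.comp measurable_fst).mul ((hq.comp (measurable_snd.sub measurable_fst)).mul
      (hind.comp measurable_snd)))).aemeasurable]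
  have step2 : ∀ y : ℝ, ∫⁻ x, p x * (q (y - x) * s.indicator 1 y)
      = (∫⁻ x, p x * q (y - x)) * s.indicator 1 y := by
    intro y
    by_cases hy : y ∈ s
    · simp [Set.indicator_of_mem hy]
    · simp [Set.indicator_of_notMem hy]
  rw [lintegral_congr step2,
    lint_ind _ hs]

lemma map_jump (M : ℝ) (g : ℝ → ℝ) (hg : Measurable g) :
    Measure.map (fun x : ℝ => x - if M ≤ x then M else 0)
      (volume.withDensity (fun x => ENNReal.ofReal (g x)))
    = volume.withDensity (fun z =>
        (if z < M then ENNReal.ofReal (g z) else 0)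
        + (if 0 ≤ z then ENNReal.ofReal (g (z + M)) else 0)) := by
  have hT : Measurable (fun x : ℝ => x - if M ≤ x then M else 0) :=
    measurable_id.sub (Measurable.ite (measurableSet_le measurable_const measurable_id)
      measurable_const measurable_const)
  ext s hs
  have hind : Measurable (s.indicator (1 : ℝ → ENNReal)) := measurable_one.indicator hs
  rw [Measure.map_apply hT hs, withDensity_apply _ (hT hs), ← lintegral_indicator (hT hs)]
  have h0 : ∀ x : ℝ, ((fun x : ℝ => x - if M ≤ x then M else 0) ⁻¹' s).indicator
      (fun x => ENNReal.ofReal (g x)) x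
      = ENNReal.ofReal (g x) * s.indicator 1 (x - if M ≤ x then M else 0) := by
    intro x
    by_cases hx : (x - if M ≤ x then M else 0) ∈ s <;>
      simp [Set.indicator, Set.mem_preimage, hx]
  rw [lintegral_congr h0]
  rw [← lintegral_add_compl (fun x => ENNReal.ofReal (g x) * s.indicator 1
      (x - if M ≤ x then M else 0)) (measurableSet_Iio (a := M))]
  have e1 : ∫⁻ x in Set.Iio M, ENNReal.ofReal (g x) * s.indicator 1
      (x - if M ≤ x then M else 0)
      = ∫⁻ x, (if x < M then ENNReal.ofReal (g x) else 0) * s.indicator 1 x := by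
    rw [← lintegral_indicator measurableSet_Iio]
    refine lintegral_congr fun x => ?_
    by_cases hx : x < M
    · rw [Set.indicator_of_mem (Set.mem_Iio.mpr hx), if_neg (not_le.2 hx), sub_zero, if_pos hx]
    · rw [Set.indicator_of_notMem (fun h => hx (Set.mem_Iio.mp h)), if_neg hx, zero_mul]
  have e2 : ∫⁻ x in (Set.Iio M)ᶜ, ENNReal.ofReal (g x) * s.indicator 1
      (x - if M ≤ x then M else 0)
      = ∫⁻ z, (if 0 ≤ z then ENNReal.ofReal (g (z + M)) else 0) * s.indicator 1 z := by
    rw [← lintegral_indicator measurableSet_Iio.compl]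
    have h4 := lintegral_add_right_eq_self (μ := volume)
      ((Set.Iio M)ᶜ.indicator fun x => ENNReal.ofReal (g x) * s.indicator 1
        (x - if M ≤ x then M else 0)) M
    rw [← h4]
    refine lintegral_congr fun z => ?_
    by_cases hz : 0 ≤ z
    · have hmem : z + M ∈ (Set.Iio M)ᶜ := by
        simp only [Set.mem_compl_iff, Set.mem_Iio, not_lt]; linarith
      rw [Set.indicator_of_mem hmem, if_pos (by linarith : M ≤ z + M), add_sub_cancel_right,
        if_pos hz]
    · have hmem : z + M ∉ (Set.Iio M)ᶜ := by
        simp only [Set.mem_compl_iff, Set.mem_Iio, not_not]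
        linarith [lt_of_not_ge hz]
      rw [Set.indicator_of_notMem hmem, if_neg hz, zero_mul]
  have hA : Measurable (fun x : ℝ => (if x < M then ENNReal.ofReal (g x) else 0)) :=
    Measurable.ite (measurableSet_lt measurable_id measurable_const)
      (ENNReal.measurable_ofReal.comp hg) measurable_const
  have hsum : (∫⁻ x, (if x < M then ENNReal.ofReal (g x) else 0) * s.indicator 1 x)
      + (∫⁻ x, (if 0 ≤ x then ENNReal.ofReal (g (x + M)) else 0) * s.indicator 1 x)
      = ∫⁻ x, ((if x < M then ENNReal.ofReal (g x) else 0)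
          + (if 0 ≤ x then ENNReal.ofReal (g (x + M)) else 0)) * s.indicator 1 x := by
    rw [← lintegral_add_left (f := fun x => (if x < M then ENNReal.ofReal (g x) else 0) * s.indicator 1 x)
      (by exact hA.mul hind)]
    exact lintegral_congr fun x => by ring
  rw [e1, e2, hsum, lint_ind _ hs]

theorem stationary_distribution_of_energy_buffer
    {Ω : Type*} [MeasurableSpace Ω] (P : Measure Ω) [IsProbabilityMeasure P]
    (b lam M Q : ℝ) (hb0 : 0 < b) (hb1 : b ≤ 1) (hlam : 0 < lam) (hM : 0 < M)
    (hpsi : 1 < b * lam * M) (hQ : Q < 0)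
    (hroot : b * lam * Real.exp (Q * M) = b * lam + Q)
    (B X : Ω → ℝ) (E : Ω → Bool)
    (hB : Measurable B) (hX : Measurable X) (hE : Measurable E)
    (hjoint : Measure.map (fun ω => ((B ω, X ω), E ω)) P
      = ((statMeasure b lam M Q).prod (expMeasure' lam)).prod (bernoulliMeasure b)) :
    Measure.map (fun ω => B ω + X ω - (if M ≤ B ω ∧ E ω = true then M else 0)) P
      = statMeasure b lam M Q := by
  classical
  have hb1' : (0:ℝ) ≤ 1 - b := by linarith
  -- the transition function
  set φ : (ℝ × ℝ) × Bool → ℝ :=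
    fun p => p.1.1 + p.1.2 - if M ≤ p.1.1 ∧ p.2 = true then M else 0 with hφdef
  have hmset : MeasurableSet {p : (ℝ × ℝ) × Bool | M ≤ p.1.1 ∧ p.2 = true} := by
    have : {p : (ℝ × ℝ) × Bool | M ≤ p.1.1 ∧ p.2 = true}
        = ((fun p : (ℝ × ℝ) × Bool => p.1.1) ⁻¹' Set.Ici M)
          ∩ ((fun p : (ℝ × ℝ) × Bool => p.2) ⁻¹' {true}) := by
      ext p; simp [Set.mem_Ici]
    rw [this]
    exact ((measurable_fst.comp measurable_fst) measurableSet_Ici).inter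
      (measurable_snd (measurableSet_singleton true))
  have hφ : Measurable φ := by
    refine Measurable.sub ?_ ?_
    · exact (measurable_fst.comp measurable_fst).add (measurable_snd.comp measurable_fst)
    · exact Measurable.ite hmset measurable_const measurable_const
  have hcomp : (fun ω => B ω + X ω - (if M ≤ B ω ∧ E ω = true then M else 0))
      = φ ∘ (fun ω => ((B ω, X ω), E ω)) := rfl
  haveI i1 : SFinite (statMeasure b lam M Q) :=
    inferInstanceAs (SFinite (volume.withDensity _))
  haveI i2 : SFinite (expMeasure' lam) :=
    inferInstanceAs (SFinite (volume.withDensity _))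
  rw [hcomp, ← Measure.map_map hφ ((hB.prodMk hX).prodMk hE), hjoint]
  -- decompose the Bernoulli factor
  rw [show bernoulliMeasure b = ENNReal.ofReal b • Measure.dirac true
      + ENNReal.ofReal (1 - b) • Measure.dirac false from rfl]
  rw [Measure.prod_add, prod_smul_right _ _ _ ENNReal.ofReal_ne_top,
    prod_smul_right _ _ _ ENNReal.ofReal_ne_top, Measure.prod_dirac, Measure.prod_dirac]
  rw [Measure.map_add _ _ hφ, Measure.map_smul, Measure.map_smul,
    Measure.map_map hφ measurable_prodMk_right,
    Measure.map_map hφ measurable_prodMk_right]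
  have hφt : φ ∘ (fun x : ℝ × ℝ => (x, true))
      = fun p : ℝ × ℝ => p.1 + p.2 - if M ≤ p.1 then M else 0 := by
    funext p; simp [hφdef]
  have hφf : φ ∘ (fun x : ℝ × ℝ => (x, false)) = fun p : ℝ × ℝ => p.1 + p.2 := by
    funext p; simp [hφdef]
  rw [hφt, hφf]
  -- rewrite the "transmit" branch through the jump map
  have hT : Measurable (fun x : ℝ => x - if M ≤ x then M else 0) :=
    measurable_id.sub (Measurable.ite (measurableSet_le measurable_const measurable_id)
      measurable_const measurable_const)
  have hsub : (fun p : ℝ × ℝ => p.1 + p.2 - if M ≤ p.1 then M else 0)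
      = (fun z : ℝ × ℝ => z.1 + z.2)
          ∘ (Prod.map (fun x : ℝ => x - if M ≤ x then M else 0) id) := by
    funext p
    by_cases h : M ≤ p.1 <;> simp [Prod.map, h] <;> ring
  rw [hsub, ← Measure.map_map measurable_add (hT.prodMap measurable_id),
    ← Measure.map_prod_map _ _ hT measurable_id, Measure.map_id]
  rw [show statMeasure b lam M Q
      = volume.withDensity (fun x => ENNReal.ofReal (statDensity b lam M Q x)) from rfl,
    map_jump M _ (measurable_statDensity b lam M Q)]
  have hD1 : (fun z => (if z < M then ENNReal.ofReal (statDensity b lam M Q z) else 0)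
        + (if 0 ≤ z then ENNReal.ofReal (statDensity b lam M Q (z + M)) else 0))
      = fun z => ENNReal.ofReal (jumpDens b lam M Q z) := by
    funext z
    have h1 : (if z < M then ENNReal.ofReal (statDensity b lam M Q z) else 0)
        = ENNReal.ofReal (if z < M then statDensity b lam M Q z else 0) := by
      split_ifs <;> simp
    have h2 : (if 0 ≤ z then ENNReal.ofReal (statDensity b lam M Q (z + M)) else 0)
        = ENNReal.ofReal (if 0 ≤ z then statDensity b lam M Q (z + M) else 0) := by
      split_ifs <;> simp
    rw [h1, h2, ← ENNReal.ofReal_add]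
    · rfl
    · split_ifs with h
      · exact statDensity_nonneg hb0 hlam hM hQ hroot z
      · exact le_refl 0
    · split_ifs with h
      · exact statDensity_nonneg hb0 hlam hM hQ hroot (z + M)
      · exact le_refl 0
  rw [hD1]
  -- convolution with the exponential density
  have hq : (fun x => ENNReal.ofReal (if 0 ≤ x then lam * Real.exp (-lam * x) else 0))
      = fun x => ENNReal.ofReal (expDens lam x) := rfl
  have hqmeas : Measurable (fun x => ENNReal.ofReal (expDens lam x)) :=
    ENNReal.measurable_ofReal.comp (measurable_expDens lam)
  have hjmeas : Measurable (fun z => ENNReal.ofReal (jumpDens b lam M Q z)) :=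
    ENNReal.measurable_ofReal.comp (measurable_jumpDens b lam M Q)
  have hgmeas : Measurable (fun z => ENNReal.ofReal (statDensity b lam M Q z)) :=
    ENNReal.measurable_ofReal.comp (measurable_statDensity b lam M Q)
  rw [show expMeasure' lam = volume.withDensity (fun x => ENNReal.ofReal (expDens lam x))
      from rfl]
  rw [map_add_withDensity _ _ hjmeas hqmeas, map_add_withDensity _ _ hgmeas hqmeas]
  -- combine the two branches
  have hRt : Measurable (fun y => ∫⁻ x, ENNReal.ofReal (jumpDens b lam M Q x)
      * ENNReal.ofReal (expDens lam (y - x))) :=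
    Measurable.lintegral_prod_right'
      ((hjmeas.comp measurable_snd).mul
        (hqmeas.comp (measurable_fst.sub measurable_snd)))
  have hRf : Measurable (fun y => ∫⁻ x, ENNReal.ofReal (statDensity b lam M Q x)
      * ENNReal.ofReal (expDens lam (y - x))) :=
    Measurable.lintegral_prod_right'
      ((hgmeas.comp measurable_snd).mul
        (hqmeas.comp (measurable_fst.sub measurable_snd)))
  rw [← withDensity_smul _ hRt, ← withDensity_smul _ hRf,
    ← withDensity_add_left (hRt.const_smul (ENNReal.ofReal b))]
  refine congrArg _ (funext fun y => ?_)
  simp only [Pi.add_apply, Pi.smul_apply, smul_eq_mul]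
  have m0 : Measurable fun x : ℝ => ENNReal.ofReal (expDens lam (y - x)) :=
    ENNReal.measurable_ofReal.comp
      ((measurable_expDens lam).comp (measurable_const.sub measurable_id))
  have m1 : Measurable fun x : ℝ => ENNReal.ofReal (jumpDens b lam M Q x)
      * ENNReal.ofReal (expDens lam (y - x)) := hjmeas.mul m0
  have m2 : Measurable fun x : ℝ => ENNReal.ofReal (statDensity b lam M Q x)
      * ENNReal.ofReal (expDens lam (y - x)) := hgmeas.mul m0
  have e1 : ENNReal.ofReal b * (∫⁻ x, ENNReal.ofReal (jumpDens b lam M Q x)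
        * ENNReal.ofReal (expDens lam (y - x)))
      = ∫⁻ x, ENNReal.ofReal b * (ENNReal.ofReal (jumpDens b lam M Q x)
        * ENNReal.ofReal (expDens lam (y - x))) := (lintegral_const_mul _ m1).symm
  have e2 : ENNReal.ofReal (1 - b) * (∫⁻ x, ENNReal.ofReal (statDensity b lam M Q x)
        * ENNReal.ofReal (expDens lam (y - x)))
      = ∫⁻ x, ENNReal.ofReal (1 - b) * (ENNReal.ofReal (statDensity b lam M Q x)
        * ENNReal.ofReal (expDens lam (y - x))) := (lintegral_const_mul _ m2).symm
  rw [e1, e2, ← lintegral_add_left (m1.const_mul _), ← lconv_eq hb0 hb1 hlam hM hQ hroot y]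
  refine lintegral_congr fun x => ?_
  have hkey : ENNReal.ofReal b * ENNReal.ofReal (jumpDens b lam M Q x)
      + ENNReal.ofReal (1 - b) * ENNReal.ofReal (statDensity b lam M Q x)
      = ENNReal.ofReal (mixDens b lam M Q x) := by
    rw [← ENNReal.ofReal_mul hb0.le, ← ENNReal.ofReal_mul hb1',
      ← ENNReal.ofReal_add (mul_nonneg hb0.le (jumpDens_nonneg hb0 hlam hM hQ hroot x))
        (mul_nonneg hb1' (statDensity_nonneg hb0 hlam hM hQ hroot x))]
    rfl
  calc ENNReal.ofReal b * (ENNReal.ofReal (jumpDens b lam M Q x)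
          * ENNReal.ofReal (expDens lam (y - x)))
        + ENNReal.ofReal (1 - b) * (ENNReal.ofReal (statDensity b lam M Q x)
          * ENNReal.ofReal (expDens lam (y - x)))
      = (ENNReal.ofReal b * ENNReal.ofReal (jumpDens b lam M Q x)
          + ENNReal.ofReal (1 - b) * ENNReal.ofReal (statDensity b lam M Q x))
          * ENNReal.ofReal (expDens lam (y - x)) := by ring
    _ = ENNReal.ofReal (mixDens b lam M Q x) * ENNReal.ofReal (expDens lam (y - x)) := by
        rw [hkey]
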